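/- Let (W,S) be a Coxeter system, I ⊆ J ⊆ S with J ∖ I ⊆ I^⊥ (i.e. every element of J ∖ I commutes with every element of I). Then N_W(W_J) ∩ N_W(W_I) ⊆ N_W(W_{J∖I}). -/

import Mathlib

open CoxeterSystem
namespace Stmt15
open scoped Classical
variable {B W : Type*} [Group W] {M : CoxeterMatrix B} (cs : CoxeterSystem M W)
local prefix:100 "s" => cs.simple

theorem shuffle (a b : B) (k : ℕ) : s b * (s a * s b) ^ k = (s b * s a) ^ k * s b := by
  induction k with
  | zero => simp
  | succ k ih => rw [pow_succ, pow_succ, ← mul_assoc, ih]; simp only [mul_assoc]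

theorem inv_sasb (a b : B) : (s a * s b)⁻¹ = s b * s a := by
  rw [mul_inv_rev, cs.inv_simple, cs.inv_simple]

theorem inv_pow_sasb (a b : B) (k : ℕ) : ((s a * s b) ^ k)⁻¹ = (s b * s a) ^ k := by
  rw [← inv_pow, inv_sasb]

theorem pow_conj_simple (a b : B) (k : ℕ) :
    ((s a * s b) ^ k)⁻¹ * (s b * (s a * s b) ^ k) = (s b * s a) ^ (2 * k) * s b := by
  rw [shuffle, inv_pow_sasb, ← mul_assoc, ← pow_add, two_mul]

theorem pow_conj_simple' (a b : B) (k : ℕ) :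
    ((s a * s b) ^ k)⁻¹ * (s b * s a * s b * (s a * s b) ^ k) =
      (s b * s a) ^ (2 * k + 1) * s b := by
  have h : s b * s a * s b * (s a * s b) ^ k = s b * s a * ((s b * s a) ^ k * s b) := by
    rw [← shuffle]; simp only [mul_assoc]
  rw [h, inv_pow_sasb]
  calc (s b * s a) ^ k * (s b * s a * ((s b * s a) ^ k * s b))
      = ((s b * s a) ^ k * ((s b * s a) ^ k * (s b * s a))) * s b := by
        rw [show (s b * s a) ^ k * (s b * s a) = (s b * s a) * (s b * s a) ^ k by
          rw [← pow_succ, ← pow_succ']]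
        simp only [mul_assoc]
    _ = (s b * s a) ^ (2 * k + 1) * s b := by rw [← pow_succ, ← pow_add]; ring_nf

theorem conj_iff (u v x : W) : (u * x * u⁻¹ = v) ↔ (x = u⁻¹ * (v * u)) := by
  constructor
  · intro h; rw [← h]; group
  · intro h; rw [h]; group

noncomputable def thetaFun (i : B) : W × ℤˣ → W × ℤˣ :=
  fun p => (s i * p.1 * s i, if p.1 = s i then -p.2 else p.2)

theorem conj_cancel (i : B) (x : W) : s i * (s i * x * s i) * s i = x := by
  simp [← mul_assoc, cs.simple_mul_simple_self, cs.simple_mul_simple_cancel_right]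

theorem conj_simple_iff (i : B) (x y : W) : (s i * x * s i = y) ↔ (x = s i * y * s i) := by
  constructor
  · intro h; rw [← h, conj_cancel]
  · intro h; rw [h, conj_cancel]

theorem conj_eq_iff (i : B) (x : W) : (s i * x * s i = s i) ↔ (x = s i) := by
  rw [conj_simple_iff]
  simp [← mul_assoc, cs.simple_mul_simple_self]

theorem thetaFun_invol (i : B) (p : W × ℤˣ) : thetaFun cs i (thetaFun cs i p) = p := by
  obtain ⟨x, ε⟩ := p
  simp only [thetaFun, conj_cancel, conj_eq_iff]
  split <;> simp

noncomputable def thetaPerm (i : B) : Equiv.Perm (W × ℤˣ) :=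
  ⟨thetaFun cs i, thetaFun cs i, thetaFun_invol cs i, thetaFun_invol cs i⟩

theorem thetaPerm_apply (i : B) (x : W) (ε : ℤˣ) :
    thetaPerm cs i (x, ε) = (s i * x * s i, if x = s i then -ε else ε) := rfl

theorem theta_pow_eval (a b : B) (k : ℕ) (x : W) (ε : ℤˣ) :
    ((thetaPerm cs a * thetaPerm cs b) ^ k) (x, ε) =
      ((s a * s b) ^ k * x * ((s a * s b) ^ k)⁻¹,
       ε * ∏ l ∈ Finset.range (2 * k),
         (if x = (s b * s a) ^ l * s b then (-1 : ℤˣ) else 1)) := by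
  induction k with
  | zero => simp
  | succ k ih =>
    rw [pow_succ', Equiv.Perm.mul_apply, ih, Equiv.Perm.mul_apply, thetaPerm_apply,
      thetaPerm_apply]
    have cond1 : ((s a * s b) ^ k * x * ((s a * s b) ^ k)⁻¹ = s b)
        ↔ (x = (s b * s a) ^ (2 * k) * s b) := by
      rw [conj_iff, pow_conj_simple]
    have cond2 : (s b * ((s a * s b) ^ k * x * ((s a * s b) ^ k)⁻¹) * s b = s a)
        ↔ (x = (s b * s a) ^ (2 * k + 1) * s b) := by
      rw [conj_simple_iff, conj_iff, pow_conj_simple']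
    have comp1 : s a * (s b * ((s a * s b) ^ k * x * ((s a * s b) ^ k)⁻¹) * s b) * s a
        = (s a * s b) ^ (k + 1) * x * ((s a * s b) ^ (k + 1))⁻¹ := by
      rw [pow_succ']
      rw [show ((s a * s b) * (s a * s b) ^ k)⁻¹ = ((s a * s b) ^ k)⁻¹ * (s b * s a) by
        rw [mul_inv_rev, inv_sasb]]
      simp only [mul_assoc]
    have hrange : 2 * (k + 1) = (2 * k) + 1 + 1 := by ring
    rw [Prod.mk.injEq]
    constructor
    · rw [comp1]
    · rw [hrange, Finset.prod_range_succ, Finset.prod_range_succ, cond1, cond2]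
      split_ifs with h1 h2 <;> simp [mul_comm, mul_assoc, mul_left_comm]

end Stmt15

namespace Stmt15
open CoxeterSystem
section
open scoped Classical
variable {B W : Type*} [Group W] {M : CoxeterMatrix B} (cs : CoxeterSystem M W)
local prefix:100 "s" => cs.simple

theorem theta_liftable : M.IsLiftable (fun i => thetaPerm cs i) := by
  intro a b
  apply Equiv.ext
  rintro ⟨x, ε⟩
  rw [Equiv.Perm.one_apply]
  rw [theta_pow_eval]
  rw [cs.simple_mul_simple_pow a b]
  rw [Prod.mk.injEq]
  constructor
  · group
  · rw [two_mul, Finset.prod_range_add, ← Finset.prod_mul_distrib]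
    have : ∀ l, ((if x = (s b * s a) ^ l * s b then (-1:ℤˣ) else 1)
        * (if x = (s b * s a) ^ (M a b + l) * s b then (-1:ℤˣ) else 1)) = 1 := by
      intro l
      rw [pow_add, cs.simple_mul_simple_pow' a b, one_mul]
      split <;> simp
    rw [Finset.prod_congr rfl (fun l _ => this l), Finset.prod_const_one, mul_one]

end
end Stmt15

namespace Stmt15
open CoxeterSystem
section
open scoped Classical
variable {B W : Type*} [Group W] {M : CoxeterMatrix B} (cs : CoxeterSystem M W)
local prefix:100 "s" => cs.simple
local prefix:100 "π" => cs.wordProd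

/-- The sign representation on `W × ℤˣ`. -/
noncomputable def Theta : W →* Equiv.Perm (W × ℤˣ) :=
  cs.lift ⟨fun i => thetaPerm cs i, theta_liftable cs⟩

@[simp] theorem Theta_simple (i : B) : Theta cs (s i) = thetaPerm cs i :=
  cs.lift_apply_simple (theta_liftable cs) i

/-- The sign cocycle. -/
noncomputable def sgn (w x : W) : ℤˣ := ((Theta cs w) (x, 1)).2

theorem Theta_apply : ∀ (w x : W) (ε : ℤˣ),
    Theta cs w (x, ε) = (w * x * w⁻¹, ε * sgn cs w x) := by
  intro w
  induction w using cs.simple_induction_left with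
  | one => intro x ε; simp [sgn]
  | mul_simple_left w i ih =>
    have key : ∀ (x : W) (δ : ℤˣ), Theta cs (s i * w) (x, δ) =
        ((s i * w) * x * (s i * w)⁻¹,
          if w * x * w⁻¹ = s i then -(δ * sgn cs w x) else δ * sgn cs w x) := by
      intro x δ
      rw [map_mul, Equiv.Perm.mul_apply, ih, Theta_simple, thetaPerm_apply]
      rw [Prod.mk.injEq]
      constructor
      · rw [mul_inv_rev, cs.inv_simple]; simp only [mul_assoc]
      · rfl
    intro x ε
    have hs : sgn cs (s i * w) x
        = if w * x * w⁻¹ = s i then -(sgn cs w x) else sgn cs w x := by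
      unfold sgn
      rw [key x 1]
      split <;> simp [ih x 1]
    rw [key x ε, hs, Prod.mk.injEq]
    refine ⟨rfl, ?_⟩
    split <;> simp

theorem sgn_cocycle (u v x : W) : sgn cs (u * v) x = sgn cs u (v * x * v⁻¹) * sgn cs v x := by
  have h1 : Theta cs (u * v) (x, 1) = Theta cs u (Theta cs v (x, 1)) := by
    rw [map_mul]; rfl
  rw [Theta_apply, Theta_apply, Theta_apply] at h1
  simpa [mul_comm] using congrArg Prod.snd h1

theorem sgn_simple (i : B) (x : W) : sgn cs (s i) x = if x = s i then -1 else 1 := by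
  unfold sgn
  rw [Theta_simple, thetaPerm_apply]

theorem sgn_one (x : W) : sgn cs 1 x = 1 := by unfold sgn; simp

end
end Stmt15

namespace Stmt15
open CoxeterSystem
section
open scoped Classical
variable {B W : Type*} [Group W] {M : CoxeterMatrix B} (cs : CoxeterSystem M W)
local prefix:100 "s" => cs.simple
local prefix:100 "π" => cs.wordProd

theorem sgn_inv_mul (w x : W) : sgn cs w⁻¹ (w * x * w⁻¹) * sgn cs w x = 1 := by
  have h := sgn_cocycle cs w⁻¹ w x
  rw [inv_mul_cancel, sgn_one] at h
  exact h.symm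

theorem sgn_refl_self {t : W} (ht : cs.IsReflection t) : sgn cs t t = -1 := by
  obtain ⟨w, i, rfl⟩ := ht
  have e2 : (s i * w⁻¹) * (w * s i * w⁻¹) * (s i * w⁻¹)⁻¹ = s i := by
    rw [mul_inv_rev, inv_inv, cs.inv_simple]
    calc s i * w⁻¹ * (w * s i * w⁻¹) * (w * s i)
        = s i * (w⁻¹ * w) * s i * (w⁻¹ * w) * s i := by simp only [mul_assoc]
      _ = s i := by simp [← mul_assoc, cs.simple_mul_simple_self,
            cs.simple_mul_simple_cancel_right]
  have c1 : sgn cs (w * (s i * w⁻¹)) (w * s i * w⁻¹)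
      = sgn cs w (s i) * sgn cs (s i * w⁻¹) (w * s i * w⁻¹) := by
    rw [sgn_cocycle, e2]
  rw [← mul_assoc] at c1
  have e3 : w⁻¹ * (w * s i * w⁻¹) * w⁻¹⁻¹ = s i := by group
  have c2 : sgn cs (s i * w⁻¹) (w * s i * w⁻¹)
      = -1 * sgn cs w⁻¹ (w * s i * w⁻¹) := by
    rw [sgn_cocycle, e3, sgn_simple]
    simp
  have c3 : sgn cs w⁻¹ (w * s i * w⁻¹) * sgn cs w (s i) = 1 := sgn_inv_mul cs w (s i)
  rw [c1, c2]
  calc sgn cs w (s i) * (-1 * sgn cs w⁻¹ (w * s i * w⁻¹))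
      = -1 * (sgn cs w⁻¹ (w * s i * w⁻¹) * sgn cs w (s i)) := by
        rw [mul_comm (sgn cs w⁻¹ (w * s i * w⁻¹)) (sgn cs w (s i))]
        rw [← mul_assoc, mul_comm (sgn cs w (s i)) (-1), mul_assoc]
    _ = -1 := by rw [c3, mul_one]

theorem wordProd_mem_closure {K : Set B} (ω : List B) (hω : ∀ l ∈ ω, l ∈ K) :
    π ω ∈ Subgroup.closure (cs.simple '' K) := by
  induction ω with
  | nil => rw [cs.wordProd_nil]; exact one_mem _
  | cons i ω ih =>
    rw [cs.wordProd_cons]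
    exact mul_mem (Subgroup.subset_closure ⟨i, hω i List.mem_cons_self, rfl⟩)
      (ih fun l hl => hω l (List.mem_cons_of_mem i hl))

theorem exists_word_of_mem_closure {K : Set B} {x : W}
    (hx : x ∈ Subgroup.closure (cs.simple '' K)) :
    ∃ ω : List B, (∀ l ∈ ω, l ∈ K) ∧ x = π ω := by
  induction hx using Subgroup.closure_induction with
  | mem y hy =>
    obtain ⟨i, hi, rfl⟩ := hy
    exact ⟨[i], by simpa using hi, by simp⟩
  | one => exact ⟨[], by simp, by simp⟩
  | mul y z _ _ ihy ihz =>
    obtain ⟨ω₁, h₁, rfl⟩ := ihy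
    obtain ⟨ω₂, h₂, rfl⟩ := ihz
    exact ⟨ω₁ ++ ω₂, by
      intro l hl
      rcases List.mem_append.mp hl with h | h
      exacts [h₁ l h, h₂ l h], (cs.wordProd_append ω₁ ω₂).symm⟩
  | inv y _ ihy =>
    obtain ⟨ω, h₁, rfl⟩ := ihy
    exact ⟨ω.reverse, fun l hl => h₁ l (List.mem_reverse.mp hl),
      (cs.wordProd_reverse ω).symm⟩

theorem exists_conj_of_sgn_neg {K : Set B} (ω : List B) (hω : ∀ l ∈ ω, l ∈ K) (x : W)
    (h : sgn cs (π ω) x = -1) :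
    ∃ u ∈ Subgroup.closure (cs.simple '' K), ∃ k ∈ K, x = u * s k * u⁻¹ := by
  induction ω with
  | nil =>
    rw [cs.wordProd_nil, sgn_one] at h
    exact absurd h (by decide)
  | cons i ω ih =>
    rw [cs.wordProd_cons, sgn_cocycle] at h
    rcases Int.units_eq_one_or (sgn cs (π ω) x) with h2 | h2
    · rw [h2, mul_one, sgn_simple] at h
      have e : π ω * x * (π ω)⁻¹ = s i := by
        by_contra hc
        rw [if_neg hc] at h
        exact absurd h (by decide)
      refine ⟨(π ω)⁻¹, inv_mem (wordProd_mem_closure cs ω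
        fun l hl => hω l (List.mem_cons_of_mem i hl)), i, hω i List.mem_cons_self, ?_⟩
      rw [← e]; group
    · exact ih (fun l hl => hω l (List.mem_cons_of_mem i hl)) h2

theorem refl_mem_closure_conj {K : Set B} {t : W} (ht : cs.IsReflection t)
    (h : t ∈ Subgroup.closure (cs.simple '' K)) :
    ∃ u ∈ Subgroup.closure (cs.simple '' K), ∃ k ∈ K, t = u * s k * u⁻¹ := by
  obtain ⟨ω, hω, hx⟩ := exists_word_of_mem_closure cs h
  exact exists_conj_of_sgn_neg cs ω hω t (by rw [← hx]; exact sgn_refl_self cs ht)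

end
end Stmt15

namespace Stmt15
open CoxeterSystem Real

theorem trig2 (u θ : ℝ) :
    Real.sin (u + θ) = 2 * Real.cos θ * Real.sin u - Real.sin (u - θ) := by
  rw [Real.sin_add, Real.sin_sub]; ring

theorem trig1 (u θ : ℝ) :
    Real.sin (u + 2*θ)
      = (4 * Real.cos θ ^ 2 - 1) * Real.sin u - 2 * Real.cos θ * Real.sin (u - θ) := by
  rw [Real.sin_add, Real.cos_two_mul, Real.sin_two_mul, Real.sin_sub]; ring

variable {B : Type*} (M : CoxeterMatrix B)

noncomputable def kf (a b : B) : ℝ := -Real.cos (Real.pi / M a b)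

theorem kf_diag (a : B) : kf M a a = 1 := by unfold kf; rw [M.diagonal a]; norm_num

theorem kf_symm (a b : B) : kf M a b = kf M b a := by unfold kf; rw [M.symmetric a b]

noncomputable def phi (a : B) : (B →₀ ℝ) →ₗ[ℝ] ℝ :=
  Finsupp.linearCombination ℝ (kf M a)

theorem phi_single (a b : B) (c : ℝ) : phi M a (Finsupp.single b c) = c * kf M a b := by
  unfold phi; rw [Finsupp.linearCombination_single, smul_eq_mul]

noncomputable def sigma (a : B) : Module.End ℝ (B →₀ ℝ) :=
  LinearMap.id - (phi M a).smulRight ((2:ℝ) • Finsupp.single a 1)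

theorem sigma_apply (a : B) (v : B →₀ ℝ) :
    sigma M a v = v - (2 * phi M a v) • Finsupp.single a 1 := by
  show v - (phi M a v) • ((2:ℝ) • Finsupp.single a 1) = _
  rw [smul_smul, mul_comm]

theorem sigma_fix {a : B} {v : B →₀ ℝ} (h : phi M a v = 0) : sigma M a v = v := by
  rw [sigma_apply, h]; simp

theorem sigma_sq (a : B) : sigma M a * sigma M a = 1 := by
  apply LinearMap.ext
  intro v
  show sigma M a (sigma M a v) = v
  rw [sigma_apply, sigma_apply, map_sub, map_smul, phi_single, kf_diag, mul_one, smul_eq_mul]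
  module

theorem single_comb_inj {a b : B} (hab : a ≠ b) {c1 c2 c1' c2' : ℝ}
    (h1 : c1 = c1') (h2 : c2 = c2') :
    c1 • Finsupp.single a (1:ℝ) + c2 • Finsupp.single b 1
      = c1' • Finsupp.single a 1 + c2' • Finsupp.single b 1 := by
  rw [h1, h2]

theorem sigma_mul_pow_order {a b : B} (hab : a ≠ b) (hm0 : M a b ≠ 0) :
    (sigma M a * sigma M b) ^ (M a b) = 1 := by
  set m := M a b with hm
  have hm1 : m ≠ 1 := M.off_diagonal a b hab
  have hm2 : 2 ≤ m := by omega
  set θ : ℝ := Real.pi / m with hθ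
  set c : ℝ := Real.cos θ with hc
  have hmR : (1:ℝ) < (m:ℝ) := by exact_mod_cast Nat.lt_of_lt_of_le Nat.one_lt_two hm2
  have hθpos : 0 < θ := by
    apply div_pos Real.pi_pos
    linarith
  have hθlt : θ < Real.pi := by
    rw [hθ]
    exact div_lt_self Real.pi_pos hmR
  have hs : 0 < Real.sin θ := Real.sin_pos_of_pos_of_lt_pi hθpos hθlt
  have hsne : Real.sin θ ≠ 0 := ne_of_gt hs
  have hkab : kf M a b = -c := rfl
  have hkba : kf M b a = -c := by rw [← kf_symm]; rfl
  set T := sigma M a * sigma M b with hT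
  set ea := Finsupp.single a (1:ℝ) with hea
  set eb := Finsupp.single b (1:ℝ) with heb
  have hTa : T ea = (4*c^2-1) • ea + (2*c) • eb := by
    show sigma M a (sigma M b ea) = _
    rw [sigma_apply M b ea, hea, phi_single, one_mul, hkba, map_sub, map_smul,
      sigma_apply M a (Finsupp.single a 1), sigma_apply M a (Finsupp.single b 1),
      phi_single, phi_single, kf_diag, hkab]
    module
  have hTb : T eb = (-(2*c)) • ea + (-1:ℝ) • eb := by
    show sigma M a (sigma M b eb) = _
    rw [sigma_apply M b eb, heb, phi_single, one_mul, kf_diag, map_sub, map_smul,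
      sigma_apply M a (Finsupp.single b 1), phi_single, hkab]
    module
  have key : ∀ k : ℕ,
      (T ^ k) ea = (Real.sin ((2*k+1)*θ)/Real.sin θ) • ea
          + (Real.sin ((2*k)*θ)/Real.sin θ) • eb
      ∧ (T ^ k) eb = (-(Real.sin ((2*k)*θ)/Real.sin θ)) • ea
          + (-(Real.sin ((2*k-1)*θ)/Real.sin θ)) • eb := by
    intro k
    induction k with
    | zero =>
      constructor
      · show ea = _
        push_cast
        rw [show (2*(0:ℝ)+1)*θ = θ by ring, show (2*(0:ℝ))*θ = 0 by ring]
        rw [Real.sin_zero, div_self hsne]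
        module
      · show eb = _
        push_cast
        rw [show (2*(0:ℝ))*θ = 0 by ring, show (2*(0:ℝ)-1)*θ = -θ by ring]
        rw [Real.sin_zero, Real.sin_neg]
        rw [show -(-Real.sin θ/Real.sin θ) = Real.sin θ/Real.sin θ by ring, div_self hsne]
        module
    | succ k ih =>
      obtain ⟨iha, ihb⟩ := ih
      have step : ∀ v : B →₀ ℝ, (T ^ (k+1)) v = T ((T ^ k) v) := by
        intro v
        rw [pow_succ']
        rfl
      constructor
      · rw [step, iha, map_add, map_smul, map_smul, hTa, hTb, smul_add, smul_add,
          smul_smul, smul_smul, smul_smul, smul_smul]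
        rw [show ∀ (p q r s : ℝ), p • ea + q • eb + (r • ea + s • eb)
            = (p + r) • ea + (q + s) • eb by intros; module]
        apply single_comb_inj hab
        · push_cast
          rw [show (2*((k:ℝ)+1)+1)*θ = ((2*k+1)*θ) + 2*θ by ring, trig1,
            show (2*(k:ℝ)+1)*θ - θ = (2*k)*θ by ring]
          field_simp
          ring
        · push_cast
          rw [show (2*((k:ℝ)+1))*θ = ((2*k)*θ) + θ + θ by ring,
            show ((2*(k:ℝ))*θ + θ) = ((2*k+1)*θ) by ring, trig2,
            show (2*(k:ℝ)+1)*θ - θ = (2*k)*θ by ring]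
          field_simp
          ring
      · rw [step, ihb, map_add, map_smul, map_smul, hTa, hTb, smul_add, smul_add,
          smul_smul, smul_smul, smul_smul, smul_smul]
        rw [show ∀ (p q r s : ℝ), p • ea + q • eb + (r • ea + s • eb)
            = (p + r) • ea + (q + s) • eb by intros; module]
        apply single_comb_inj hab
        · push_cast
          rw [show (2*((k:ℝ)+1))*θ = ((2*k)*θ) + 2*θ by ring, trig1,
            show (2*(k:ℝ))*θ - θ = (2*k-1)*θ by ring]
          field_simp
          ring
        · push_cast
          rw [show (2*((k:ℝ)+1)-1)*θ = ((2*k)*θ) + θ by ring, trig2,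
            show (2*(k:ℝ))*θ - θ = (2*k-1)*θ by ring]
          field_simp
          ring
  have hmRne : (m:ℝ) ≠ 0 := by exact_mod_cast hm0
  have hmθ : (m:ℝ) * θ = Real.pi := by rw [hθ]; field_simp
  have hTma : (T ^ m) ea = ea := by
    rw [(key m).1]
    rw [show (2*(m:ℝ)+1)*θ = θ + 2*Real.pi by rw [← hmθ]; ring,
      show (2*(m:ℝ))*θ = 2*Real.pi by rw [← hmθ]; ring]
    rw [Real.sin_add_two_pi, Real.sin_two_pi, div_self hsne]
    module
  have hTmb : (T ^ m) eb = eb := by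
    rw [(key m).2]
    rw [show (2*(m:ℝ)-1)*θ = 2*Real.pi - θ by rw [← hmθ]; ring,
      show (2*(m:ℝ))*θ = 2*Real.pi by rw [← hmθ]; ring]
    rw [Real.sin_two_pi_sub, Real.sin_two_pi]
    rw [show -(-Real.sin θ/Real.sin θ) = Real.sin θ/Real.sin θ by ring, div_self hsne]
    module
  apply LinearMap.ext
  intro v
  show (T ^ m) v = v
  set α := phi M a v with hα
  set β := phi M b v with hβ
  set d : ℝ := 1 - c^2 with hd
  have hdval : d = Real.sin θ ^ 2 := by
    have := Real.sin_sq_add_cos_sq θ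
    rw [hd, hc]; linarith
  have hdne : d ≠ 0 := by rw [hdval]; positivity
  set x : ℝ := (α + c*β)/d with hx
  set y : ℝ := (β + c*α)/d with hy
  set q : B →₀ ℝ := v - x • ea - y • eb with hq
  have hpa_ea : phi M a ea = 1 := by rw [hea, phi_single, kf_diag, mul_one]
  have hpa_eb : phi M a eb = -c := by rw [heb, phi_single, hkab, one_mul]
  have hpb_ea : phi M b ea = -c := by rw [hea, phi_single, hkba, one_mul]
  have hpb_eb : phi M b eb = 1 := by rw [heb, phi_single, kf_diag, mul_one]
  have hqa : phi M a q = 0 := by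
    rw [hq, map_sub, map_sub, map_smul, map_smul, hpa_ea, hpa_eb, ← hα,
      smul_eq_mul, smul_eq_mul, hx, hy]
    field_simp
    ring
  have hqb : phi M b q = 0 := by
    rw [hq, map_sub, map_sub, map_smul, map_smul, hpb_ea, hpb_eb, ← hβ,
      smul_eq_mul, smul_eq_mul, hx, hy]
    field_simp
    ring
  have hfix : ∀ n : ℕ, (T ^ n) q = q := by
    intro n
    induction n with
    | zero => rfl
    | succ n ih =>
      have : (T ^ (n+1)) q = T ((T ^ n) q) := by rw [pow_succ']; rfl
      rw [this, ih]
      show sigma M a (sigma M b q) = q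
      rw [sigma_fix M hqb, sigma_fix M hqa]
  have hv : v = q + x • ea + y • eb := by rw [hq]; module
  conv_lhs => rw [hv]
  rw [map_add, map_add, map_smul, map_smul, hfix, hTma, hTmb, ← hv]

theorem sigma_liftable : M.IsLiftable (sigma M) := by
  intro a b
  rcases eq_or_ne a b with rfl | hab
  · rw [M.diagonal a, pow_one]
    exact sigma_sq M a
  · rcases eq_or_ne (M a b) 0 with h0 | h0
    · rw [h0, pow_zero]
    · exact sigma_mul_pow_order M hab h0

end Stmt15

namespace Stmt15
open CoxeterSystem
section
open scoped Classical
variable {B W : Type*} [Group W] {M : CoxeterMatrix B} (cs : CoxeterSystem M W)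
local prefix:100 "s" => cs.simple

/-- The geometric representation. -/
noncomputable def rho : W →* Module.End ℝ (B →₀ ℝ) :=
  cs.lift ⟨sigma M, sigma_liftable M⟩

@[simp] theorem rho_simple (i : B) : rho cs (s i) = sigma M i :=
  cs.lift_apply_simple (sigma_liftable M) i

theorem simple_not_mem_closure {K : Set B} {i : B} (hi : i ∉ K) :
    s i ∉ Subgroup.closure (cs.simple '' K) := by
  intro hmem
  have P : ∀ x ∈ Subgroup.closure (cs.simple '' K),
      ∀ (v : B →₀ ℝ) (j : B), j ∉ K → (rho cs x v) j = v j := by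
    intro x hx
    induction hx using Subgroup.closure_induction with
    | mem y hy =>
      obtain ⟨k, hk, rfl⟩ := hy
      intro v j hj
      rw [rho_simple, sigma_apply, Finsupp.sub_apply, Finsupp.smul_apply,
        Finsupp.single_apply]
      have : k ≠ j := fun h => hj (h ▸ hk)
      rw [if_neg this]
      simp
    | one => intro v j hj; simp
    | mul y z _ _ ihy ihz =>
      intro v j hj
      rw [map_mul]
      have : (rho cs y * rho cs z) v = rho cs y (rho cs z v) := rfl
      rw [this, ihy _ j hj, ihz v j hj]
    | inv y hy ihy =>
      intro v j hj
      have h2 : rho cs y (rho cs y⁻¹ v) = v := by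
        have : rho cs y * rho cs y⁻¹ = 1 := by rw [← map_mul, mul_inv_cancel, map_one]
        calc rho cs y (rho cs y⁻¹ v) = (rho cs y * rho cs y⁻¹) v := rfl
          _ = v := by rw [this]; rfl
      have := ihy (rho cs y⁻¹ v) j hj
      rw [h2] at this
      rw [this]
  have h1 := P (s i) hmem (Finsupp.single i 1) i hi
  rw [rho_simple, sigma_apply, Finsupp.sub_apply, Finsupp.smul_apply,
    Finsupp.single_eq_same, phi_single, kf_diag] at h1
  norm_num at h1

end
end Stmt15

namespace Stmt15
open CoxeterSystem
section
open scoped Classical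
variable {B W : Type*} [Group W] {M : CoxeterMatrix B} (cs : CoxeterSystem M W)
local prefix:100 "s" => cs.simple

variable (I J : Set B)

theorem commute_simple (hperp : ∀ p ∈ J \ I, ∀ t ∈ I, M p t = 2)
    {i t : B} (hi : i ∈ J \ I) (ht : t ∈ I) : Commute (s i) (s t) := by
  have h := cs.simple_mul_simple_pow i t
  rw [hperp i hi t ht, pow_two] at h
  have h2 : s i * s t = (s i * s t)⁻¹ := by
    rw [eq_comm, inv_eq_iff_mul_eq_one]
    exact h
  rw [mul_inv_rev, cs.inv_simple, cs.inv_simple] at h2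
  exact h2

theorem commute_closure (hperp : ∀ p ∈ J \ I, ∀ t ∈ I, M p t = 2)
    {a b : W} (ha : a ∈ Subgroup.closure (cs.simple '' (J \ I)))
    (hb : b ∈ Subgroup.closure (cs.simple '' I)) : Commute a b := by
  induction ha using Subgroup.closure_induction with
  | mem y hy =>
    obtain ⟨i, hi, rfl⟩ := hy
    induction hb using Subgroup.closure_induction with
    | mem z hz =>
      obtain ⟨t, ht, rfl⟩ := hz
      exact commute_simple cs I J hperp hi ht
    | one => exact Commute.one_right _
    | mul z z' _ _ ih ih' => exact Commute.mul_right ih ih'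
    | inv z _ ih => exact Commute.inv_right ih
  | one => exact Commute.one_left _
  | mul y y' _ _ ih ih' => exact Commute.mul_left ih ih'
  | inv y _ ih => exact Commute.inv_left ih

theorem decomp (hIJ : I ⊆ J) {u : W} (hu : u ∈ Subgroup.closure (cs.simple '' J))
    (hperp : ∀ p ∈ J \ I, ∀ t ∈ I, M p t = 2) :
    ∃ a ∈ Subgroup.closure (cs.simple '' (J \ I)),
      ∃ b ∈ Subgroup.closure (cs.simple '' I), u = a * b := by
  induction hu using Subgroup.closure_induction with
  | mem y hy =>
    obtain ⟨j, hj, rfl⟩ := hy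
    by_cases hjI : j ∈ I
    · exact ⟨1, one_mem _, s j, Subgroup.subset_closure ⟨j, hjI, rfl⟩, by rw [one_mul]⟩
    · exact ⟨s j, Subgroup.subset_closure ⟨j, ⟨hj, hjI⟩, rfl⟩, 1, one_mem _,
        by rw [mul_one]⟩
  | one => exact ⟨1, one_mem _, 1, one_mem _, by rw [one_mul]⟩
  | mul y y' _ _ ih ih' =>
    obtain ⟨a, ha, b, hb, rfl⟩ := ih
    obtain ⟨a', ha', b', hb', rfl⟩ := ih'
    refine ⟨a * a', mul_mem ha ha', b * b', mul_mem hb hb', ?_⟩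
    have hc : Commute a' b := (commute_closure cs I J hperp ha' hb)
    calc a * b * (a' * b') = a * (b * a') * b' := by simp only [mul_assoc]
      _ = a * (a' * b) * b' := by rw [hc.eq]
      _ = a * a' * (b * b') := by simp only [mul_assoc]
  | inv y _ ih =>
    obtain ⟨a, ha, b, hb, rfl⟩ := ih
    refine ⟨a⁻¹, inv_mem ha, b⁻¹, inv_mem hb, ?_⟩
    rw [mul_inv_rev]
    exact ((commute_closure cs I J hperp (inv_mem ha) (inv_mem hb)).eq).symm

theorem conj_simple_mem (hIJ : I ⊆ J) (hperp : ∀ p ∈ J \ I, ∀ t ∈ I, M p t = 2)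
    {w : W}
    (hwC : w ∈ Subgroup.normalizer (Subgroup.closure (cs.simple '' J)))
    (hwB : w ∈ Subgroup.normalizer (Subgroup.closure (cs.simple '' I)))
    {i : B} (hi : i ∈ J \ I) : w * s i * w⁻¹ ∈ Subgroup.closure (cs.simple '' (J \ I)) := by
  have hsiC : s i ∈ Subgroup.closure (cs.simple '' J) :=
    Subgroup.subset_closure ⟨i, hi.1, rfl⟩
  have hrC : w * s i * w⁻¹ ∈ Subgroup.closure (cs.simple '' J) :=
    (Subgroup.mem_normalizer_iff.mp hwC (s i)).mp hsiC
  have hrefl : cs.IsReflection (w * s i * w⁻¹) := ⟨w, i, rfl⟩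
  obtain ⟨u, huC, j, hjJ, hru⟩ := refl_mem_closure_conj cs hrefl hrC
  obtain ⟨a, haA, b, hbB, rfl⟩ := decomp cs I J hIJ huC hperp
  by_cases hjI : j ∈ I
  · exfalso
    have hbj : b * s j * b⁻¹ ∈ Subgroup.closure (cs.simple '' I) :=
      mul_mem (mul_mem hbB (Subgroup.subset_closure ⟨j, hjI, rfl⟩)) (inv_mem hbB)
    have hcom : Commute a (b * s j * b⁻¹) := commute_closure cs I J hperp haA hbj
    have hr : w * s i * w⁻¹ = b * s j * b⁻¹ := by
      rw [hru, mul_inv_rev]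
      calc a * b * s j * (b⁻¹ * a⁻¹) = a * (b * s j * b⁻¹) * a⁻¹ := by
            simp only [mul_assoc]
        _ = (b * s j * b⁻¹) * a * a⁻¹ := by rw [hcom.eq]
        _ = b * s j * b⁻¹ := by group
    have hrB : w * s i * w⁻¹ ∈ Subgroup.closure (cs.simple '' I) := by
      rw [hr]; exact hbj
    have hsiB : s i ∈ Subgroup.closure (cs.simple '' I) :=
      (Subgroup.mem_normalizer_iff.mp hwB (s i)).mpr hrB
    exact simple_not_mem_closure cs hi.2 hsiB
  · have hsjA : s j ∈ Subgroup.closure (cs.simple '' (J \ I)) :=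
      Subgroup.subset_closure ⟨j, ⟨hjJ, hjI⟩, rfl⟩
    have hcom : Commute (s j) b := commute_closure cs I J hperp hsjA hbB
    have hr : w * s i * w⁻¹ = a * s j * a⁻¹ := by
      rw [hru, mul_inv_rev]
      calc a * b * s j * (b⁻¹ * a⁻¹) = a * (b * s j) * b⁻¹ * a⁻¹ := by
            simp only [mul_assoc]
        _ = a * (s j * b) * b⁻¹ * a⁻¹ := by rw [hcom.eq]
        _ = a * s j * (b * b⁻¹) * a⁻¹ := by simp only [mul_assoc]
        _ = a * s j * a⁻¹ := by group
    rw [hr]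
    exact mul_mem (mul_mem haA hsjA) (inv_mem haA)

theorem main_thm (hIJ : I ⊆ J)
    (hperp : ∀ p ∈ J \ I, ∀ t ∈ I, M p t = 2) :
    Subgroup.normalizer (Subgroup.closure (cs.simple '' J) : Set W) ⊓
        Subgroup.normalizer (Subgroup.closure (cs.simple '' I) : Set W) ≤
      Subgroup.normalizer (Subgroup.closure (cs.simple '' (J \ I)) : Set W) := by
  have key : ∀ w : W,
      w ∈ Subgroup.normalizer (Subgroup.closure (cs.simple '' J)) →
      w ∈ Subgroup.normalizer (Subgroup.closure (cs.simple '' I)) →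
      ∀ x ∈ Subgroup.closure (cs.simple '' (J \ I)),
        w * x * w⁻¹ ∈ Subgroup.closure (cs.simple '' (J \ I)) := by
    intro w hwC hwB x hx
    induction hx using Subgroup.closure_induction with
    | mem y hy =>
      obtain ⟨i, hi, rfl⟩ := hy
      exact conj_simple_mem cs I J hIJ hperp hwC hwB hi
    | one => simpa using one_mem _
    | mul y y' _ _ ih ih' =>
      have : w * (y * y') * w⁻¹ = (w * y * w⁻¹) * (w * y' * w⁻¹) := by group
      rw [this]
      exact mul_mem ih ih'
    | inv y _ ih =>
      have : w * y⁻¹ * w⁻¹ = (w * y * w⁻¹)⁻¹ := by group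
      rw [this]
      exact inv_mem ih
  intro w hw
  rw [Subgroup.mem_inf] at hw
  obtain ⟨hwC, hwB⟩ := hw
  rw [Subgroup.mem_normalizer_iff]
  intro x
  constructor
  · exact key w hwC hwB x
  · intro hx
    have h2 := key w⁻¹ (inv_mem hwC) (inv_mem hwB) _ hx
    have : w⁻¹ * (w * x * w⁻¹) * w⁻¹⁻¹ = x := by group
    rwa [this] at h2

end
end Stmt15

/-- If `I ⊆ J ⊆ S` and every element of `J ∖ I` commutes
with every element of `I` (i.e. `m(s,t) = 2`), then
`N_W(W_J) ∩ N_W(W_I) ⊆ N_W(W_{J∖I})`. -/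
theorem stmt_15 {B W : Type*} [Group W] {M : CoxeterMatrix B}
    (cs : CoxeterSystem M W) (I J : Set B) (hIJ : I ⊆ J)
    (hperp : ∀ s ∈ J \ I, ∀ t ∈ I, M s t = 2) :
    Subgroup.normalizer (Subgroup.closure (cs.simple '' J) : Set W) ⊓
        Subgroup.normalizer (Subgroup.closure (cs.simple '' I) : Set W) ≤
      Subgroup.normalizer (Subgroup.closure (cs.simple '' (J \ I)) : Set W) :=
  Stmt15.main_thm cs I J hIJ hperp
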